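/- Under the same hypotheses (Φ positive, C², solving the geodesic equation on open interval I, h ≠ Φ² on I, h of class C¹), the function u_bot(x) = exp(∫_{x₀}^x Φ(ξ)·(Φ'(ξ) + √((h(ξ)−Φ(ξ)²)² + Φ'(ξ)²))/(h(ξ)−Φ(ξ)²) dξ) satisfies u_bot''(x) + h(x)·u_bot(x) = 0 for all x ∈ I. -/

import Mathlib

set_option maxHeartbeats 1000000 in
lemma riccati_aux (P P1 P2 H H1 S : ℝ) (hPne : P ≠ 0) (hD : H - P ^ 2 ≠ 0) (hSne : S ≠ 0)
    (hS2 : S ^ 2 = (H - P ^ 2) ^ 2 + P1 ^ 2)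
    (hp2 : P2 = (3 * P ^ 2 + H) / (P ^ 2 - H) * P1 ^ 2 / P
        - H1 * P1 / (P ^ 2 - H) + (P ^ 4 - H ^ 2) / P) :
    ((P1 * (P1 + S) + P * (P2 +
        (2 * (H - P ^ 2) ^ 1 * (H1 - 2 * P ^ 1 * P1) + 2 * P1 ^ 1 * P2) / (2 * S)))
        * (H - P ^ 2) - (P * (P1 + S)) * (H1 - 2 * P ^ 1 * P1)) / (H - P ^ 2) ^ 2
      + (P * (P1 + S) / (H - P ^ 2)) ^ 2 + H = 0 := by
  have hD' : P ^ 2 - H ≠ 0 := fun hc => hD (by linarith)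
  rw [hp2]
  field_simp
  linear_combination (-(H-P^2)*P^2*S - (H-P^2)^2*P1 + (H-P^2)*P*(H1 - 2*P*P1)
    - 2*(H-P^2)*P^2*P1) * hS2

theorem stmt_1 (h Φ : ℝ → ℝ) (a b x₀ : ℝ) (hx₀ : x₀ ∈ Set.Ioo a b)
    (hh : ContDiff ℝ 1 h)
    (hΦ1 : ∀ x ∈ Set.Ioo a b, DifferentiableAt ℝ Φ x)
    (hΦ2 : ∀ x ∈ Set.Ioo a b, DifferentiableAt ℝ (deriv Φ) x)
    (hΦpos : ∀ x ∈ Set.Ioo a b, 0 < Φ x)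
    (hne : ∀ x ∈ Set.Ioo a b, h x ≠ (Φ x) ^ 2)
    (hgeo : ∀ x ∈ Set.Ioo a b,
      deriv (deriv Φ) x =
        (3 * (Φ x) ^ 2 + h x) / ((Φ x) ^ 2 - h x) * (deriv Φ x) ^ 2 / Φ x
          - deriv h x * deriv Φ x / ((Φ x) ^ 2 - h x)
          + ((Φ x) ^ 4 - (h x) ^ 2) / Φ x) :
    ∀ x ∈ Set.Ioo a b,
      deriv (deriv (fun y => Real.exp (∫ ξ in x₀..y,
          Φ ξ * (deriv Φ ξ + Real.sqrt ((h ξ - (Φ ξ) ^ 2) ^ 2 + (deriv Φ ξ) ^ 2))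
            / (h ξ - (Φ ξ) ^ 2)))) x
        + h x * Real.exp (∫ ξ in x₀..x,
          Φ ξ * (deriv Φ ξ + Real.sqrt ((h ξ - (Φ ξ) ^ 2) ^ 2 + (deriv Φ ξ) ^ 2))
            / (h ξ - (Φ ξ) ^ 2)) = 0 := by
  set g : ℝ → ℝ := fun ξ =>
    Φ ξ * (deriv Φ ξ + Real.sqrt ((h ξ - (Φ ξ) ^ 2) ^ 2 + (deriv Φ ξ) ^ 2))
      / (h ξ - (Φ ξ) ^ 2) with hgdef
  set u : ℝ → ℝ := fun y => Real.exp (∫ ξ in x₀..y, g ξ) with hudef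
  -- denominator nonzero
  have hDne : ∀ x ∈ Set.Ioo a b, h x - (Φ x) ^ 2 ≠ 0 := fun x hx =>
    sub_ne_zero.mpr (hne x hx)
  -- continuity of g on the open interval
  have hgc : ∀ x ∈ Set.Ioo a b, ContinuousAt g x := by
    intro x hx
    have h1 : ContinuousAt Φ x := (hΦ1 x hx).continuousAt
    have h2 : ContinuousAt (deriv Φ) x := (hΦ2 x hx).continuousAt
    have h3 : ContinuousAt h x := hh.continuous.continuousAt
    have hden : ContinuousAt (fun ξ => h ξ - (Φ ξ) ^ 2) x := h3.sub (h1.pow 2)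
    have hq : ContinuousAt (fun ξ => (h ξ - (Φ ξ) ^ 2) ^ 2 + (deriv Φ ξ) ^ 2) x :=
      (hden.pow 2).add (h2.pow 2)
    have hs : ContinuousAt (fun ξ =>
        Real.sqrt ((h ξ - (Φ ξ) ^ 2) ^ 2 + (deriv Φ ξ) ^ 2)) x :=
      Real.continuous_sqrt.continuousAt.comp hq
    exact (h1.mul (h2.add hs)).div hden (hDne x hx)
  have hgcOn : ContinuousOn g (Set.Ioo a b) := fun x hx => (hgc x hx).continuousWithinAt
  -- derivative of the inner integral
  have hF : ∀ x ∈ Set.Ioo a b, HasDerivAt (fun y => ∫ ξ in x₀..y, g ξ) (g x) x := by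
    intro x hx
    have hsub : Set.uIcc x₀ x ⊆ Set.Ioo a b := Set.ordConnected_Ioo.uIcc_subset hx₀ hx
    have hint : IntervalIntegrable g MeasureTheory.volume x₀ x :=
      (hgcOn.mono hsub).intervalIntegrable
    exact intervalIntegral.integral_hasDerivAt_right hint
      (hgcOn.stronglyMeasurableAtFilter isOpen_Ioo x hx) (hgc x hx)
  have hu : ∀ x ∈ Set.Ioo a b, HasDerivAt u (g x * u x) x := by
    intro x hx
    have := (hF x hx).exp
    simpa [hudef, mul_comm] using this
  intro x hx
  obtain ⟨hax, hxb⟩ := hx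
  have hx : x ∈ Set.Ioo a b := ⟨hax, hxb⟩
  -- abbreviations
  set P := Φ x with hP
  set P1 := deriv Φ x with hP1
  set P2 := deriv (deriv Φ) x with hP2
  set H := h x with hH
  set H1 := deriv h x with hH1
  have hD : H - P ^ 2 ≠ 0 := hDne x hx
  have hPpos : 0 < P := hΦpos x hx
  have hPne : P ≠ 0 := ne_of_gt hPpos
  have hqpos : 0 < (H - P ^ 2) ^ 2 + P1 ^ 2 := by positivity
  set S := Real.sqrt ((H - P ^ 2) ^ 2 + P1 ^ 2) with hSdef
  have hSpos : 0 < S := Real.sqrt_pos.mpr hqpos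
  have hSne : S ≠ 0 := ne_of_gt hSpos
  have hS2 : S ^ 2 = (H - P ^ 2) ^ 2 + P1 ^ 2 := Real.sq_sqrt (le_of_lt hqpos)
  -- HasDerivAt for g at x
  have hPd : HasDerivAt Φ P1 x := (hΦ1 x hx).hasDerivAt
  have hP1d : HasDerivAt (deriv Φ) P2 x := (hΦ2 x hx).hasDerivAt
  have hHd : HasDerivAt h H1 x := (hh.differentiable one_ne_zero).differentiableAt.hasDerivAt
  have hDd : HasDerivAt (fun ξ => h ξ - (Φ ξ) ^ 2) (H1 - 2 * P ^ 1 * P1) x := by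
    exact (hHd.sub (hPd.pow 2)).congr_deriv (by simp only [hP, hH, hP1]; norm_num)
  have hqd : HasDerivAt (fun ξ => (h ξ - (Φ ξ) ^ 2) ^ 2 + (deriv Φ ξ) ^ 2)
      (2 * (H - P ^ 2) ^ 1 * (H1 - 2 * P ^ 1 * P1) + 2 * P1 ^ 1 * P2) x := by
    exact ((hDd.pow 2).add (hP1d.pow 2)).congr_deriv (by simp only [hP, hH, hP1]; norm_num)
  have hqx : (fun ξ => (h ξ - (Φ ξ) ^ 2) ^ 2 + (deriv Φ ξ) ^ 2) x ≠ 0 := ne_of_gt hqpos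
  have hSd : HasDerivAt (fun ξ => Real.sqrt ((h ξ - (Φ ξ) ^ 2) ^ 2 + (deriv Φ ξ) ^ 2))
      ((2 * (H - P ^ 2) ^ 1 * (H1 - 2 * P ^ 1 * P1) + 2 * P1 ^ 1 * P2) / (2 * S)) x := by
    simpa [hSdef] using hqd.sqrt hqx
  have hNd : HasDerivAt (fun ξ =>
      Φ ξ * (deriv Φ ξ + Real.sqrt ((h ξ - (Φ ξ) ^ 2) ^ 2 + (deriv Φ ξ) ^ 2)))
      (P1 * (P1 + S) + P * (P2 +
        (2 * (H - P ^ 2) ^ 1 * (H1 - 2 * P ^ 1 * P1) + 2 * P1 ^ 1 * P2) / (2 * S))) x := by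
    exact hPd.mul (hP1d.add hSd)
  set G : ℝ := ((P1 * (P1 + S) + P * (P2 +
        (2 * (H - P ^ 2) ^ 1 * (H1 - 2 * P ^ 1 * P1) + 2 * P1 ^ 1 * P2) / (2 * S)))
        * (H - P ^ 2) - (P * (P1 + S)) * (H1 - 2 * P ^ 1 * P1)) / (H - P ^ 2) ^ 2
    with hGdef
  have hgd : HasDerivAt g G x := by
    rw [hgdef, hGdef]
    exact hNd.div hDd hD
  -- first derivative of u equals g * u near x
  have heq : deriv u =ᶠ[nhds x] fun y => g y * u y := by
    filter_upwards [isOpen_Ioo.mem_nhds hx] with y hy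
    exact (hu y hy).deriv
  have hderiv2 : deriv (deriv u) x = G * u x + g x * (g x * u x) := by
    rw [heq.deriv_eq]
    exact (hgd.mul (hu x hx)).deriv
  have hgx : g x = P * (P1 + S) / (H - P ^ 2) := rfl
  have key : G + (g x) ^ 2 + H = 0 := by
    have hp2 : P2 = (3 * P ^ 2 + H) / (P ^ 2 - H) * P1 ^ 2 / P
        - H1 * P1 / (P ^ 2 - H) + (P ^ 4 - H ^ 2) / P := hgeo x hx
    rw [hGdef, hgx]
    exact riccati_aux P P1 P2 H H1 S hPne hD hSne hS2 hp2
  have : deriv (deriv u) x + h x * u x = (G + (g x) ^ 2 + H) * u x := by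
    rw [hderiv2]; ring
  show deriv (deriv u) x + h x * u x = 0
  rw [this, key, zero_mul]
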